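/- Fix β > log 4. There exists a critical value K_c^{(1)}(β) > 0 such that: (a) for every 0 < K < K_c^{(1)}(β), Ẽ_{β,K} = {0}; (b) for K = K_c^{(1)}(β) there exists z̃(β,K) > 0 such that Ẽ_{β,K} = {0, z̃(β,K), −z̃(β,K)}; (c) for every K > K_c^{(1)}(β) there exists z̃(β,K) > 0 such that Ẽ_{β,K} = {z̃(β,K), −z̃(β,K)}; (d) the function K ↦ z̃(β,K) is strictly increasing and continuous on [K_c^{(1)}(β), ∞), and z̃(β, K_c^{(1)}(β)) > 0. -/

import Mathlib

noncomputable section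
open Real Set


/-- `c_β(t) = log[(1 + e^{−β}(e^t + e^{−t}))/(1 + 2e^{−β})]`. -/
def cBeta (β t : ℝ) : ℝ :=
  Real.log ((1 + Real.exp (-β) * (Real.exp t + Real.exp (-t))) / (1 + 2 * Real.exp (-β)))

/-- `J_β(z) = sup_{t ∈ ℝ} {t z − c_β(t)}`, the Legendre–Fenchel transform of `c_β`
(finite on `[-1,1]`, where it is used below). -/
def Jbeta (β z : ℝ) : ℝ := ⨆ t : ℝ, (t * z - cBeta β t)

/-- `Ẽ_{β,K}`: the set of `z ∈ [-1,1]` minimizing `J_β(z) − βK z²` over `[-1,1]`. -/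
def tildeE (β K : ℝ) : Set ℝ :=
  {z | z ∈ Set.Icc (-1 : ℝ) 1 ∧
    ∀ y ∈ Set.Icc (-1 : ℝ) 1, Jbeta β z - β * K * z ^ 2 ≤ Jbeta β y - β * K * y ^ 2}

namespace CWaux

variable (ε : ℝ)

def u (t : ℝ) : ℝ := ε * (Real.exp t + Real.exp (-t))
def A (t : ℝ) : ℝ := 1 + u ε t
def c (t : ℝ) : ℝ := Real.log (A ε t) - Real.log (1 + 2*ε)
def v (t : ℝ) : ℝ := ε * (Real.exp t - Real.exp (-t))
def cp (t : ℝ) : ℝ := v ε t / A ε t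
def cpp (t : ℝ) : ℝ := (u ε t + 4*ε^2) / (A ε t)^2
def q (t : ℝ) : ℝ := t * cpp ε t - cp ε t
def r (t : ℝ) : ℝ := t * cp ε t / 2 - c ε t
def G (lam t : ℝ) : ℝ := t^2/(2*lam) - c ε t

variable {ε : ℝ} (hε0 : 0 < ε)

lemma exp_add_exp_neg_ge (t : ℝ) : 2 ≤ Real.exp t + Real.exp (-t) := by
  rw [Real.exp_neg]
  have hx := Real.exp_pos t
  have h1 : Real.exp t * (Real.exp t)⁻¹ = 1 := mul_inv_cancel₀ hx.ne'
  nlinarith [sq_nonneg (Real.exp t - 1)]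

section basic
include hε0

lemma u_pos (t : ℝ) : 0 < u ε t := by
  have h1 := Real.exp_pos t
  have h2 := Real.exp_pos (-t)
  unfold u; positivity

lemma u_ge (t : ℝ) : 2*ε ≤ u ε t := by
  have := exp_add_exp_neg_ge t
  unfold u; nlinarith

lemma A_pos (t : ℝ) : 0 < A ε t := by
  have := u_pos hε0 (ε := ε) t
  unfold A; linarith

lemma A_ge (t : ℝ) : 1 + 2*ε ≤ A ε t := by
  have := u_ge hε0 (ε := ε) t
  unfold A; linarith

lemma one_add_two_eps_pos : (0:ℝ) < 1 + 2*ε := by linarith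

end basic

lemma u_even (t : ℝ) : u ε (-t) = u ε t := by simp [u, add_comm]

lemma c_even (t : ℝ) : c ε (-t) = c ε t := by simp [c, A, u_even]

lemma v_odd (t : ℝ) : v ε (-t) = - v ε t := by simp [v]; ring

lemma u_zero : u ε 0 = 2*ε := by simp [u]; ring

lemma c_zero : c ε 0 = 0 := by
  simp [c, A, u_zero]

lemma v_zero : v ε 0 = 0 := by simp [v]

lemma cp_zero : cp ε 0 = 0 := by simp [cp, v_zero]

lemma hasDerivAt_u (t : ℝ) : HasDerivAt (u ε) (v ε t) t := by
  have h1 := Real.hasDerivAt_exp t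
  have h2 : HasDerivAt (fun s : ℝ => Real.exp (-s)) (-Real.exp (-t)) t := by
    simpa using (hasDerivAt_neg t).exp
  show HasDerivAt (fun y => ε * (Real.exp y + Real.exp (-y))) _ t
  simpa [v, mul_comm, sub_eq_add_neg] using ((h1.add h2).const_mul ε)

lemma hasDerivAt_A (t : ℝ) : HasDerivAt (A ε) (v ε t) t := by
  show HasDerivAt (fun y => 1 + u ε y) _ t
  simpa [A] using (hasDerivAt_u (ε := ε) t).const_add 1

include hε0 in
lemma hasDerivAt_c (t : ℝ) : HasDerivAt (c ε) (cp ε t) t := by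
  have h := ((hasDerivAt_A (ε := ε) t).log (A_pos hε0 t).ne')
  show HasDerivAt (fun y => Real.log (A ε y) - Real.log (1 + 2*ε)) _ t
  simpa [c, cp] using h.sub_const (Real.log (1 + 2*ε))

lemma u_sq_sub_v_sq (t : ℝ) : u ε t ^ 2 - v ε t ^ 2 = 4*ε^2 := by
  have h : Real.exp t * Real.exp (-t) = 1 := by
    rw [← Real.exp_add]; simp
  simp only [u, v]; nlinarith [h]

lemma hasDerivAt_v (t : ℝ) : HasDerivAt (v ε) (u ε t) t := by
  have h1 := Real.hasDerivAt_exp t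
  have h2 : HasDerivAt (fun s : ℝ => Real.exp (-s)) (-Real.exp (-t)) t := by
    simpa using (hasDerivAt_neg t).exp
  show HasDerivAt (fun y => ε * (Real.exp y - Real.exp (-y))) _ t
  simpa [u, mul_comm, sub_eq_add_neg] using ((h1.sub h2).const_mul ε)

include hε0 in
lemma hasDerivAt_cp (t : ℝ) : HasDerivAt (cp ε) (cpp ε t) t := by
  have hA := A_pos hε0 (ε := ε) t
  have h := (hasDerivAt_v (ε := ε) t).div (hasDerivAt_A (ε := ε) t) hA.ne'
  have h2 := u_sq_sub_v_sq (ε := ε) t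
  have hnum : u ε t * A ε t - v ε t * v ε t = u ε t + 4*ε^2 := by
    unfold A; nlinarith [h2]
  have key : (u ε t * A ε t - v ε t * v ε t) / (A ε t)^2 = cpp ε t := by
    unfold cpp; rw [hnum]
  rw [← key]; exact h

include hε0 in
lemma cpp_pos (t : ℝ) : 0 < cpp ε t := by
  have h1 := u_pos hε0 (ε := ε) t
  have h2 := A_pos hε0 (ε := ε) t
  unfold cpp; positivity

include hε0 in
lemma cp_lt_one (t : ℝ) : cp ε t < 1 := by
  have hA := A_pos hε0 (ε := ε) t
  rw [cp, div_lt_one hA]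
  have := Real.exp_pos (-t)
  unfold v A u; nlinarith

include hε0 in
lemma neg_one_lt_cp (t : ℝ) : -1 < cp ε t := by
  have hA := A_pos hε0 (ε := ε) t
  rw [cp, neg_lt, ← neg_div, div_lt_one hA]
  have := Real.exp_pos t
  unfold v A u; nlinarith

include hε0 in
lemma cp_mem_Icc (t : ℝ) : cp ε t ∈ Icc (-1:ℝ) 1 :=
  ⟨(neg_one_lt_cp hε0 t).le, (cp_lt_one hε0 t).le⟩

include hε0 in
lemma cp_pos {t : ℝ} (ht : 0 < t) : 0 < cp ε t := by
  have hA := A_pos hε0 (ε := ε) t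
  have hv : 0 < v ε t := by
    have : Real.exp (-t) < Real.exp t := Real.exp_lt_exp.2 (by linarith)
    unfold v; nlinarith
  exact div_pos hv hA

include hε0 in
lemma cp_strictMono : StrictMono (cp ε) := by
  have : ∀ t, deriv (cp ε) t = cpp ε t := fun t => (hasDerivAt_cp hε0 t).deriv
  exact strictMono_of_deriv_pos (fun t => this t ▸ cpp_pos hε0 t)

include hε0 in
lemma c_lower (t : ℝ) : |t| + Real.log ε - Real.log (1 + 2*ε) ≤ c ε t := by
  have hA : ε * Real.exp |t| ≤ A ε t := by
    rcases abs_cases t with ⟨h, _⟩ | ⟨h, _⟩ <;> rw [h] <;>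
      · have h1 := Real.exp_pos t
        have h2 := Real.exp_pos (-t)
        unfold A u; nlinarith
  have h0 : (0:ℝ) < ε * Real.exp |t| := by positivity
  have := Real.log_le_log h0 hA
  rw [Real.log_mul hε0.ne' (Real.exp_pos _).ne', Real.log_exp] at this
  unfold c; linarith

include hε0 in
lemma c_upper (t : ℝ) : c ε t ≤ |t| := by
  have hA : A ε t ≤ (1 + 2*ε) * Real.exp |t| := by
    have h1 : Real.exp t ≤ Real.exp |t| := Real.exp_le_exp.2 (le_abs_self t)
    have h2 : Real.exp (-t) ≤ Real.exp |t| := Real.exp_le_exp.2 (neg_le_abs t)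
    have h3 : (1:ℝ) ≤ Real.exp |t| := Real.one_le_exp (abs_nonneg t)
    unfold A u; nlinarith
  have := Real.log_le_log (A_pos hε0 t) hA
  rw [Real.log_mul (one_add_two_eps_pos hε0).ne' (Real.exp_pos _).ne', Real.log_exp] at this
  unfold c; linarith

include hε0 in
lemma c_nonneg (t : ℝ) : 0 ≤ c ε t := by
  have := Real.log_le_log (one_add_two_eps_pos hε0) (A_ge hε0 t)
  unfold c; linarith

include hε0 in
lemma c_tangent (t s : ℝ) : c ε t + cp ε t * (s - t) ≤ c ε s := by
  rcases lt_trichotomy s t with h | h | h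
  · obtain ⟨ξ, hξ, hslope⟩ := exists_hasDerivAt_eq_slope (c ε) (cp ε) h
      (fun x _ => (hasDerivAt_c hε0 x).continuousAt.continuousWithinAt)
      (fun x _ => hasDerivAt_c hε0 x)
    have hmono : cp ε ξ < cp ε t := cp_strictMono hε0 hξ.2
    have hst : t - s > 0 := by linarith
    have : c ε t - c ε s = cp ε ξ * (t - s) := by
      field_simp at hslope; linarith [hslope]
    nlinarith
  · simp [h]
  · obtain ⟨ξ, hξ, hslope⟩ := exists_hasDerivAt_eq_slope (c ε) (cp ε) h
      (fun x _ => (hasDerivAt_c hε0 x).continuousAt.continuousWithinAt)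
      (fun x _ => hasDerivAt_c hε0 x)
    have hmono : cp ε t < cp ε ξ := cp_strictMono hε0 hξ.1
    have hst : s - t > 0 := by linarith
    have : c ε s - c ε t = cp ε ξ * (s - t) := by
      field_simp at hslope; linarith [hslope]
    nlinarith

lemma fstep {a x y : ℝ} (ha : 0 < a) (hx : 0 < x) (hxy : x < y) (hy : y + 2*a ≤ 1) :
    (x+a)/(1+x)^2 < (y+a)/(1+y)^2 := by
  have hy0 : 0 < y := hx.trans hxy
  rw [div_lt_div_iff₀ (by positivity) (by positivity)]
  nlinarith [mul_pos hx (sub_pos.2 hxy), sq_nonneg (x - y)]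

lemma fstep2 {a x y : ℝ} (ha : 0 < a) (hx : 1 ≤ x + 2*a) (h0 : 0 < x) (hxy : x < y) :
    (y+a)/(1+y)^2 < (x+a)/(1+x)^2 := by
  have hy0 : 0 < y := h0.trans hxy
  rw [div_lt_div_iff₀ (by positivity) (by positivity)]
  nlinarith [mul_pos h0 (sub_pos.2 hxy), sq_nonneg (x - y)]

include hε0 in
lemma v_pos {t : ℝ} (ht : 0 < t) : 0 < v ε t := by
  have : Real.exp (-t) < Real.exp t := Real.exp_lt_exp.2 (by linarith)
  unfold v; nlinarith

lemma continuous_u : Continuous (u ε) := by unfold u; continuity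

include hε0 in
lemma u_strictMonoOn : StrictMonoOn (u ε) (Ici 0) := by
  apply strictMonoOn_of_deriv_pos (convex_Ici 0) (continuous_u.continuousOn)
  intro t ht
  rw [interior_Ici] at ht
  rw [(hasDerivAt_u (ε := ε) t).deriv]
  exact v_pos hε0 ht

lemma cpp_eq (t : ℝ) : cpp ε t = (u ε t + 4*ε^2)/(1 + u ε t)^2 := rfl

include hε0 in
lemma cpp_lt_left {s t T0 : ℝ} (hT0u : u ε T0 = 1 - 8*ε^2) (hs : 0 ≤ s) (hst : s < t)
    (ht : t ≤ T0) : cpp ε s < cpp ε t := by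
  have ha : (0:ℝ) < 4*ε^2 := by positivity
  have hx : 0 < u ε s := u_pos hε0 s
  have hT0 : (0:ℝ) ≤ T0 := le_trans hs (le_trans hst.le ht)
  have hxy : u ε s < u ε t := u_strictMonoOn hε0 hs (le_trans hs (le_of_lt hst)) hst
  have hy : u ε t + 2*(4*ε^2) ≤ 1 := by
    have : u ε t ≤ u ε T0 := by
      rcases eq_or_lt_of_le ht with h | h
      · exact le_of_eq (by rw [h])
      · exact (u_strictMonoOn hε0 (le_trans hs hst.le) hT0 h).le
    rw [hT0u] at this; linarith
  have := fstep ha hx hxy hy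
  rw [cpp_eq, cpp_eq]; exact this

include hε0 in
lemma cpp_lt_right {s t T0 : ℝ} (hT0 : 0 < T0) (hT0u : u ε T0 = 1 - 8*ε^2) (hs : T0 ≤ s)
    (hst : s < t) : cpp ε t < cpp ε s := by
  have ha : (0:ℝ) < 4*ε^2 := by positivity
  have hx : 1 ≤ u ε s + 2*(4*ε^2) := by
    have : u ε T0 ≤ u ε s := by
      rcases eq_or_lt_of_le hs with h | h
      · exact le_of_eq (by rw [h])
      · exact (u_strictMonoOn hε0 hT0.le (le_trans hT0.le hs) h).le
    rw [hT0u] at this; linarith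
  have hxy : u ε s < u ε t := u_strictMonoOn hε0 (le_trans hT0.le hs)
    (le_trans hT0.le (le_trans hs hst.le)) hst
  have := fstep2 ha hx (u_pos hε0 s) hxy
  rw [cpp_eq, cpp_eq]; exact this

include hε0 in
lemma exists_T0 (hε : ε < 1/4) : ∃ T0, 0 < T0 ∧ u ε T0 = 1 - 8*ε^2 := by
  set b := Real.log (1/ε) with hb
  have hεlt : (0:ℝ) < 1/ε := by positivity
  have hub : (1:ℝ) ≤ u ε b := by
    have : Real.exp b = 1/ε := Real.exp_log hεlt
    have h2 := Real.exp_pos (-b)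
    unfold u; rw [this]; rw [mul_add]
    have : ε * (1/ε) = 1 := by field_simp
    nlinarith
  have hu0 : u ε 0 = 2*ε := u_zero
  have hb0 : (0:ℝ) ≤ b := by
    rw [hb]
    apply Real.log_nonneg
    rw [le_div_iff₀ hε0]; linarith
  have hkey : 1 - 8*ε^2 ∈ Icc (u ε 0) (u ε b) := by
    constructor
    · rw [hu0]; nlinarith
    · nlinarith [sq_nonneg ε]
  obtain ⟨T0, hT0mem, hT0⟩ := intermediate_value_Icc hb0 (continuous_u.continuousOn) hkey
  refine ⟨T0, ?_, hT0⟩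
  rcases eq_or_lt_of_le hT0mem.1 with h | h
  · exfalso; rw [← h, hu0] at hT0; nlinarith
  · exact h

include hε0 in
lemma continuous_cp : Continuous (cp ε) :=
  continuous_iff_continuousAt.2 fun t => (hasDerivAt_cp hε0 t).continuousAt

include hε0 in
lemma continuous_c : Continuous (c ε) :=
  continuous_iff_continuousAt.2 fun t => (hasDerivAt_c hε0 t).continuousAt

include hε0 in
lemma continuous_cpp : Continuous (cpp ε) := by
  apply Continuous.div (by unfold u; continuity) (by unfold A u; continuity)
  intro t
  exact (pow_pos (A_pos hε0 t) 2).ne'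

include hε0 in
lemma continuous_q : Continuous (q ε) :=
  ((continuous_id.mul (continuous_cpp hε0)).sub (continuous_cp hε0))

include hε0 in
lemma q_pos_left {t T0 : ℝ} (hT0u : u ε T0 = 1 - 8*ε^2) (ht : 0 < t) (htT0 : t ≤ T0) :
    0 < q ε t := by
  obtain ⟨ξ, hξ, hslope⟩ := exists_hasDerivAt_eq_slope (cp ε) (cpp ε) ht
    (fun x _ => (hasDerivAt_cp hε0 x).continuousAt.continuousWithinAt)
    (fun x _ => hasDerivAt_cp hε0 x)
  rw [cp_zero, sub_zero, sub_zero] at hslope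
  have ht' : t ≠ 0 := ne_of_gt ht
  have hcp : cp ε t = cpp ε ξ * t := by
    rw [hslope]; field_simp
  have hlt : cpp ε ξ < cpp ε t := cpp_lt_left hε0 hT0u hξ.1.le hξ.2 htT0
  unfold q; nlinarith

include hε0 in
lemma q_strictAnti_right {s t T0 : ℝ} (hT0 : 0 < T0) (hT0u : u ε T0 = 1 - 8*ε^2)
    (hs : T0 ≤ s) (hst : s < t) : q ε t < q ε s := by
  obtain ⟨ξ, hξ, hslope⟩ := exists_hasDerivAt_eq_slope (cp ε) (cpp ε) hst
    (fun x _ => (hasDerivAt_cp hε0 x).continuousAt.continuousWithinAt)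
    (fun x _ => hasDerivAt_cp hε0 x)
  have hts : t - s ≠ 0 := sub_ne_zero.2 hst.ne'
  have hdiff : cp ε t - cp ε s = cpp ε ξ * (t - s) := by
    rw [hslope]; field_simp
  have h1 : cpp ε t < cpp ε ξ := cpp_lt_right hε0 hT0 hT0u (le_trans hs hξ.1.le) hξ.2
  have h2 : cpp ε t < cpp ε s := cpp_lt_right hε0 hT0 hT0u hs hst
  have hs0 : 0 < s := lt_of_lt_of_le hT0 hs
  unfold q; nlinarith

include hε0 in
lemma exists_q_neg {T0 : ℝ} (hT0 : 0 < T0) : ∃ T1, T0 < T1 ∧ q ε T1 < 0 := by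
  have hcpT0 : 0 < cp ε T0 := cp_pos hε0 hT0
  set C : ℝ := 4/ε + 64 with hC
  have hCpos : 0 < C := by positivity
  set T1 : ℝ := max (T0 + 1) (C/cp ε T0 + 1) with hT1
  have hT1a : T0 + 1 ≤ T1 := le_max_left _ _
  have hT1b : C/cp ε T0 + 1 ≤ T1 := le_max_right _ _
  have hT1pos : 0 < T1 := by nlinarith
  have hT1one : 1 ≤ T1 := by
    have : (0:ℝ) < C/cp ε T0 := by positivity
    nlinarith
  refine ⟨T1, by nlinarith, ?_⟩
  -- exp T1 ≥ T1^2/4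
  have hexp : T1^2/4 ≤ Real.exp T1 := by
    have h1 : 1 + T1/2 ≤ Real.exp (T1/2) := by linarith [Real.add_one_le_exp (T1/2)]
    have h2 : Real.exp (T1/2) * Real.exp (T1/2) = Real.exp T1 := by
      rw [← Real.exp_add]; ring_nf
    nlinarith [Real.exp_pos (T1/2)]
  have hu1 : ε * (T1^2/4) ≤ u ε T1 := by
    have h2 := Real.exp_pos (-T1)
    have := mul_le_mul_of_nonneg_left hexp hε0.le
    unfold u; nlinarith
  have hu0 : 0 < u ε T1 := u_pos hε0 T1
  -- T1 * cpp T1 ≤ C / T1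
  have hbound : T1 * cpp ε T1 ≤ C / T1 := by
    have hA : (u ε T1)^2 ≤ (A ε T1)^2 := by
      unfold A; nlinarith
    have h1 : cpp ε T1 ≤ (u ε T1 + 4*ε^2) / (u ε T1)^2 := by
      unfold cpp
      exact div_le_div_of_nonneg_left (by positivity) (by positivity) hA
    have h2 : T1 * ((u ε T1 + 4*ε^2) / (u ε T1)^2) ≤ C / T1 := by
      rw [mul_div_assoc', div_le_div_iff₀ (by positivity) hT1pos]
      have hu2 : (ε * (T1^2/4))^2 ≤ (u ε T1)^2 :=
        pow_le_pow_left₀ (by positivity) hu1 2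
      rw [hC]
      have e1 : T1 * (u ε T1 + 4*ε^2) * T1 = T1^2 * u ε T1 + 4*ε^2*T1^2 := by ring
      have e2 : T1^2 * u ε T1 ≤ (4/ε) * (u ε T1)^2 := by
        have : T1^2 ≤ (4/ε) * u ε T1 := by
          rw [div_mul_eq_mul_div, le_div_iff₀ hε0]; nlinarith
        nlinarith
      have e3 : 4*ε^2*T1^2 ≤ 64 * (u ε T1)^2 := by
        have : (ε * (T1^2/4))^2 = ε^2 * T1^4/16 := by ring
        nlinarith [sq_nonneg T1, pow_le_pow_left₀ (by positivity : (0:ℝ) ≤ 1) hT1one 2]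
      calc T1 * (u ε T1 + 4*ε^2) * T1 = T1^2 * u ε T1 + 4*ε^2*T1^2 := e1
        _ ≤ (4/ε) * (u ε T1)^2 + 64 * (u ε T1)^2 := by linarith
        _ = (4/ε + 64) * (u ε T1)^2 := by ring
    calc T1 * cpp ε T1 ≤ T1 * ((u ε T1 + 4*ε^2) / (u ε T1)^2) := by
          apply mul_le_mul_of_nonneg_left h1 hT1pos.le
      _ ≤ C / T1 := h2
  have hCT1 : C / T1 < cp ε T0 := by
    rw [div_lt_iff₀ hT1pos]
    have : C/cp ε T0 < T1 := by linarith
    rw [div_lt_iff₀ hcpT0] at this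
    linarith [this]
  have hcpmono : cp ε T0 < cp ε T1 := cp_strictMono hε0 (by nlinarith)
  unfold q; nlinarith

include hε0 in
lemma exists_tau {T0 : ℝ} (hT0 : 0 < T0) (hT0u : u ε T0 = 1 - 8*ε^2) :
    ∃ tau, T0 < tau ∧ q ε tau = 0 ∧
      (∀ t, 0 < t → t < tau → 0 < q ε t) ∧ (∀ t, tau < t → q ε t < 0) := by
  obtain ⟨T1, hT01, hqT1⟩ := exists_q_neg hε0 hT0
  have hqT0 : 0 < q ε T0 := q_pos_left hε0 hT0u hT0 le_rfl
  have hmem : (0:ℝ) ∈ Icc (q ε T1) (q ε T0) := ⟨hqT1.le, hqT0.le⟩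
  obtain ⟨tau, htmem, htau⟩ := intermediate_value_Icc' hT01.le
    ((continuous_q hε0).continuousOn) hmem
  have htauT0 : T0 < tau := by
    rcases eq_or_lt_of_le htmem.1 with h | h
    · exfalso; rw [← h] at htau; linarith
    · exact h
  refine ⟨tau, htauT0, htau, ?_, ?_⟩
  · intro t ht htt
    rcases le_or_gt t T0 with h | h
    · exact q_pos_left hε0 hT0u ht h
    · have := q_strictAnti_right hε0 hT0 hT0u h.le htt
      rw [htau] at this; exact this
  · intro t htt
    have := q_strictAnti_right hε0 hT0 hT0u (le_of_lt htauT0) htt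
    rw [htau] at this; exact this

def rho (E : ℝ) (t : ℝ) : ℝ := cp E t / t

include hε0 in
lemma hasDerivAt_rho {t : ℝ} (ht : t ≠ 0) : HasDerivAt (rho ε) (q ε t / t^2) t := by
  have h := (hasDerivAt_cp hε0 t).div (hasDerivAt_id t) ht
  have e : q ε t / t^2 = (cpp ε t * id t - cp ε t * 1) / (id t)^2 := by simp only [q, id]; ring
  rw [e]; exact h

include hε0 in
lemma continuousOn_rho {s : Set ℝ} (hs : ∀ t ∈ s, t ≠ 0) : ContinuousOn (rho ε) s :=
  fun t ht => ((hasDerivAt_rho hε0 (hs t ht)).continuousAt).continuousWithinAt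

include hε0 in
lemma rho_strictMonoOn {tau : ℝ} (htau : 0 < tau)
    (hq : ∀ t, 0 < t → t < tau → 0 < q ε t) : StrictMonoOn (rho ε) (Ioc 0 tau) := by
  apply strictMonoOn_of_deriv_pos (convex_Ioc 0 tau)
    (continuousOn_rho hε0 (fun t ht => (ne_of_gt ht.1)))
  intro t ht
  rw [interior_Ioc] at ht
  rw [(hasDerivAt_rho hε0 (ne_of_gt ht.1)).deriv]
  exact div_pos (hq t ht.1 ht.2) (pow_pos ht.1 2)

include hε0 in
lemma rho_strictAntiOn {tau : ℝ} (htau : 0 < tau)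
    (hq : ∀ t, tau < t → q ε t < 0) : StrictAntiOn (rho ε) (Ici tau) := by
  apply strictAntiOn_of_deriv_neg (convex_Ici tau)
    (continuousOn_rho hε0 (fun t ht => (ne_of_gt (lt_of_lt_of_le htau ht))))
  intro t ht
  rw [interior_Ici] at ht
  have ht0 : 0 < t := lt_trans htau ht
  rw [(hasDerivAt_rho hε0 (ne_of_gt ht0)).deriv]
  exact div_neg_of_neg_of_pos (hq t ht) (pow_pos ht0 2)

include hε0 in
lemma rho_le_rho_tau {tau : ℝ} (htau : 0 < tau)
    (hq1 : ∀ t, 0 < t → t < tau → 0 < q ε t) (hq2 : ∀ t, tau < t → q ε t < 0)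
    {t : ℝ} (ht : 0 < t) : rho ε t ≤ rho ε tau := by
  rcases lt_trichotomy t tau with h | h | h
  · exact (rho_strictMonoOn hε0 htau hq1 ⟨ht, h.le⟩ ⟨htau, le_rfl⟩ h).le
  · rw [h]
  · exact ((rho_strictAntiOn hε0 htau hq2) self_mem_Ici (le_of_lt h) h).le

include hε0 in
lemma rho_pos {t : ℝ} (ht : 0 < t) : 0 < rho ε t := div_pos (cp_pos hε0 ht) ht

include hε0 in
lemma rho_lt_inv {t : ℝ} (ht : 0 < t) : rho ε t < 1/t := by
  rw [rho, div_lt_div_iff₀ ht ht]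
  nlinarith [cp_lt_one hε0 t]

include hε0 in
lemma hasDerivAt_r (t : ℝ) : HasDerivAt (r ε) (q ε t / 2) t := by
  have h1 : HasDerivAt (fun s => s * cp ε s / 2) ((cp ε t + t * cpp ε t)/2) t := by
    have := ((hasDerivAt_id t).mul (hasDerivAt_cp hε0 t)).div_const 2
    simpa using this
  have h := h1.sub (hasDerivAt_c hε0 t)
  have : (cp ε t + t * cpp ε t)/2 - cp ε t = q ε t / 2 := by unfold q; ring
  rw [this] at h
  exact h

lemma r_zero : r ε 0 = 0 := by simp [r, c_zero]

include hε0 in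
lemma continuous_r : Continuous (r ε) :=
  continuous_iff_continuousAt.2 fun t => (hasDerivAt_r hε0 t).continuousAt

include hε0 in
lemma r_tau_pos {tau : ℝ} (htau : 0 < tau)
    (hq1 : ∀ t, 0 < t → t < tau → 0 < q ε t) : 0 < r ε tau := by
  have hmono : StrictMonoOn (r ε) (Icc 0 tau) := by
    apply strictMonoOn_of_deriv_pos (convex_Icc 0 tau) ((continuous_r hε0).continuousOn)
    intro t ht
    rw [interior_Icc] at ht
    rw [(hasDerivAt_r hε0 t).deriv]
    linarith [hq1 t ht.1 ht.2]
  have := hmono ⟨le_rfl, htau.le⟩ ⟨htau.le, le_rfl⟩ htau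
  rw [r_zero] at this; exact this

include hε0 in
lemma r_strictAntiOn {tau : ℝ} (htau : 0 < tau) (hq2 : ∀ t, tau < t → q ε t < 0) :
    StrictAntiOn (r ε) (Ici tau) := by
  apply strictAntiOn_of_deriv_neg (convex_Ici tau) ((continuous_r hε0).continuousOn)
  intro t ht
  rw [interior_Ici] at ht
  rw [(hasDerivAt_r hε0 t).deriv]
  linarith [hq2 t ht]

include hε0 in
lemma exists_sc {tau : ℝ} (htau : 0 < tau)
    (hq1 : ∀ t, 0 < t → t < tau → 0 < q ε t) (hq2 : ∀ t, tau < t → q ε t < 0) :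
    ∃ sc, tau < sc ∧ r ε sc = 0 ∧
      (∀ t, tau ≤ t → t < sc → 0 < r ε t) ∧ (∀ t, sc < t → r ε t < 0) := by
  set B : ℝ := max (tau + 1) (2*(Real.log (1+2*ε) - Real.log ε) + 1) with hB
  have hB1 : tau + 1 ≤ B := le_max_left _ _
  have hB2 : 2*(Real.log (1+2*ε) - Real.log ε) + 1 ≤ B := le_max_right _ _
  have hBpos : 0 < B := by nlinarith
  have hrB : r ε B < 0 := by
    have h1 := c_lower hε0 (ε := ε) B
    have h2 : cp ε B < 1 := cp_lt_one hε0 B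
    have habs : |B| = B := abs_of_pos hBpos
    rw [habs] at h1
    unfold r; nlinarith
  have hrtau : 0 < r ε tau := r_tau_pos hε0 htau hq1
  have hmem : (0:ℝ) ∈ Icc (r ε B) (r ε tau) := ⟨hrB.le, hrtau.le⟩
  obtain ⟨sc, hscmem, hsc⟩ := intermediate_value_Icc' (by linarith : tau ≤ B)
    ((continuous_r hε0).continuousOn) hmem
  have hanti := r_strictAntiOn hε0 htau hq2
  have hsctau : tau < sc := by
    rcases eq_or_lt_of_le hscmem.1 with h | h
    · exfalso; rw [← h] at hsc; linarith
    · exact h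
  refine ⟨sc, hsctau, hsc, ?_, ?_⟩
  · intro t h1 h2
    have := hanti (mem_Ici.2 h1) (mem_Ici.2 (le_trans h1 h2.le)) h2
    rw [hsc] at this; exact this
  · intro t h1
    have := hanti (mem_Ici.2 hsctau.le) (mem_Ici.2 (le_trans hsctau.le h1.le)) h1
    rw [hsc] at this; exact this

variable {lam : ℝ}

include hε0 in
lemma hasDerivAt_G (hlam : 0 < lam) (t : ℝ) :
    HasDerivAt (G ε lam) (t/lam - cp ε t) t := by
  have h1 : HasDerivAt (fun s : ℝ => s^2/(2*lam)) (t/lam) t := by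
    have := (hasDerivAt_pow 2 t).div_const (2*lam)
    refine this.congr_deriv ?_
    rw [div_eq_div_iff (by positivity) hlam.ne']; push_cast; ring
  exact h1.sub (hasDerivAt_c hε0 t)

include hε0 in
lemma continuous_G : Continuous (G ε lam) := by
  apply Continuous.sub _ (continuous_c hε0)
  continuity

lemma G_even (t : ℝ) : G ε lam (-t) = G ε lam t := by
  unfold G; rw [c_even]; ring_nf

lemma G_zero : G ε lam 0 = 0 := by simp [G, c_zero]

include hε0 in
lemma G_strictMonoOn {D : Set ℝ} (hD : Convex ℝ D)
    (h : ∀ s ∈ interior D, lam * cp ε s < s) (hlam : 0 < lam) :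
    StrictMonoOn (G ε lam) D := by
  apply strictMonoOn_of_deriv_pos hD ((continuous_G hε0).continuousOn)
  intro t ht
  rw [(hasDerivAt_G hε0 hlam t).deriv]
  have := h t ht
  rw [sub_pos, lt_div_iff₀ hlam]
  linarith

include hε0 in
lemma G_strictAntiOn {D : Set ℝ} (hD : Convex ℝ D)
    (h : ∀ s ∈ interior D, s < lam * cp ε s) (hlam : 0 < lam) :
    StrictAntiOn (G ε lam) D := by
  apply strictAntiOn_of_deriv_neg hD ((continuous_G hε0).continuousOn)
  intro t ht
  rw [(hasDerivAt_G hε0 hlam t).deriv]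
  have := h t ht
  rw [sub_neg, div_lt_iff₀ hlam]
  linarith

include hε0 in
lemma exists_G_min (hlam : 0 < lam) : ∃ t0, ∀ s, G ε lam t0 ≤ G ε lam s := by
  set R : ℝ := 2*lam + 1 with hR
  have hRpos : 0 < R := by nlinarith
  have hout : ∀ s : ℝ, R ≤ |s| → 0 < G ε lam s := by
    intro s hs
    have h1 := c_upper hε0 (ε := ε) s
    have h2 : s^2 = |s|^2 := (sq_abs s).symm
    have h3 : R ≤ |s| := hs
    have habs : (0:ℝ) ≤ |s| := abs_nonneg s
    unfold G
    rw [h2]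
    have hgt : |s| < |s|^2/(2*lam) := by
      rw [lt_div_iff₀ (by linarith : (0:ℝ) < 2*lam)]; nlinarith
    linarith
  obtain ⟨t0, ht0mem, ht0⟩ := (isCompact_Icc (a := -R) (b := R)).exists_isMinOn
    (nonempty_Icc.2 (by linarith)) ((continuous_G hε0).continuousOn)
  refine ⟨t0, fun s => ?_⟩
  rcases le_or_gt |s| R with h | h
  · exact ht0 (by rcases abs_le.1 h with ⟨h1, h2⟩; exact ⟨h1, h2⟩)
  · have h1 := hout s h.le
    have h2 : G ε lam t0 ≤ G ε lam 0 := ht0 ⟨by linarith, by linarith⟩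
    rw [G_zero] at h2
    linarith

include hε0 in
lemma argmin_stationary (hlam : 0 < lam) {t : ℝ} (ht : ∀ s, G ε lam t ≤ G ε lam s) :
    lam * cp ε t = t := by
  have hloc : IsLocalMin (G ε lam) t := Filter.Eventually.of_forall (fun s => ht s)
  have := hloc.deriv_eq_zero
  rw [(hasDerivAt_G hε0 hlam t).deriv] at this
  have h2 : t / lam = cp ε t := by linarith [this]
  field_simp at h2
  linarith [h2]

section main
variable {tau t2 : ℝ} (htau : 0 < tau)
  (hq1 : ∀ t, 0 < t → t < tau → 0 < q ε t) (hq2 : ∀ t, tau < t → q ε t < 0)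
  (hlam : 0 < lam)

omit hε0 in
include hlam in
lemma rho_t2_eq {t2 : ℝ} (ht20 : 0 < t2) (ht2 : lam * cp ε t2 = t2) :
    rho ε t2 = 1/lam := by
  rw [rho, div_eq_div_iff (ne_of_gt ht20) (ne_of_gt hlam)]
  linarith

omit hε0 in
include hlam in
lemma rho_lt_inv_imp {s : ℝ} (hs : 0 < s) (h : rho ε s < 1/lam) : lam * cp ε s < s := by
  rw [rho, div_lt_div_iff₀ hs hlam] at h
  linarith

omit hε0 in
include hlam in
lemma inv_lt_rho_imp {s : ℝ} (hs : 0 < s) (h : 1/lam < rho ε s) : s < lam * cp ε s := by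
  rw [rho, div_lt_div_iff₀ hlam hs] at h
  linarith

omit hε0 in
include hlam in
lemma rho_lt_imp {s t2 : ℝ} (hs : 0 < s) (ht20 : 0 < t2) (ht2 : lam * cp ε t2 = t2)
    (h : rho ε s < rho ε t2) : lam * cp ε s < s := by
  rw [rho_t2_eq hlam ht20 ht2] at h
  exact rho_lt_inv_imp hlam hs h

omit hε0 in
include hlam in
lemma rho_gt_imp {s t2 : ℝ} (hs : 0 < s) (ht20 : 0 < t2) (ht2 : lam * cp ε t2 = t2)
    (h : rho ε t2 < rho ε s) : s < lam * cp ε s := by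
  rw [rho_t2_eq hlam ht20 ht2] at h
  exact inv_lt_rho_imp hlam hs h

include hε0 htau hq1 hq2 hlam in
lemma G_main (ht2tau : tau ≤ t2) (ht2 : lam * cp ε t2 = t2) :
    ∀ t, 0 < t → t ≠ t2 → min 0 (G ε lam t2) < G ε lam t := by
  have ht20 : 0 < t2 := lt_of_lt_of_le htau ht2tau
  have hrhoanti := rho_strictAntiOn hε0 htau hq2
  have hrhomono := rho_strictMonoOn hε0 htau hq1
  have hanti2 : StrictAntiOn (G ε lam) (Icc tau t2) := by
    apply G_strictAntiOn hε0 (convex_Icc tau t2) _ hlam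
    intro s hs
    rw [interior_Icc] at hs
    have hs0 : 0 < s := lt_trans htau hs.1
    exact rho_gt_imp hlam hs0 ht20 ht2
      (hrhoanti (mem_Ici.2 hs.1.le) (mem_Ici.2 (le_trans hs.1.le hs.2.le)) hs.2)
  have hmono2 : StrictMonoOn (G ε lam) (Ici t2) := by
    apply G_strictMonoOn hε0 (convex_Ici t2) _ hlam
    intro s hs
    rw [interior_Ici] at hs
    have hs0 : 0 < s := lt_trans ht20 hs
    exact rho_lt_imp hlam hs0 ht20 ht2
      (hrhoanti (mem_Ici.2 ht2tau) (mem_Ici.2 (le_trans ht2tau hs.le)) hs)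
  intro t ht htne
  have hGt2min : G ε lam t2 ≥ min 0 (G ε lam t2) := min_le_right 0 _
  rcases le_or_gt tau t with httau | httau
  · -- t ≥ tau
    rcases lt_or_gt_of_ne htne with h | h
    · have := hanti2 ⟨httau, h.le⟩ ⟨le_trans httau h.le, le_rfl⟩ h
      linarith
    · have := hmono2 (mem_Ici.2 le_rfl) (mem_Ici.2 h.le) h
      linarith
  · -- t < tau
    have hmin0 : min 0 (G ε lam t2) ≤ 0 := min_le_left 0 _
    rcases le_or_gt (lam * cp ε t) t with hcase | hcase
    · have hrt : rho ε t ≤ 1/lam := by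
        rw [rho, div_le_div_iff₀ ht hlam]; linarith
      have hmono1 : StrictMonoOn (G ε lam) (Icc 0 t) := by
        apply G_strictMonoOn hε0 (convex_Icc 0 t) _ hlam
        intro s hs
        rw [interior_Icc] at hs
        refine rho_lt_inv_imp hlam hs.1 (lt_of_lt_of_le ?_ hrt)
        exact hrhomono ⟨hs.1, by linarith [hs.2]⟩ ⟨ht, httau.le⟩ hs.2
      have hlt : G ε lam 0 < G ε lam t := hmono1 ⟨le_rfl, ht.le⟩ ⟨ht.le, le_rfl⟩ ht
      rw [G_zero] at hlt
      linarith
    · have hrt : 1/lam < rho ε t := by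
        rw [rho, div_lt_div_iff₀ hlam ht]; linarith
      have hanti1 : StrictAntiOn (G ε lam) (Icc t tau) := by
        apply G_strictAntiOn hε0 (convex_Icc t tau) _ hlam
        intro s hs
        rw [interior_Icc] at hs
        have hs0 : 0 < s := lt_trans ht hs.1
        refine inv_lt_rho_imp hlam hs0 (lt_trans hrt ?_)
        exact hrhomono ⟨ht, by linarith⟩ ⟨hs0, hs.2.le⟩ hs.1
      have h1 : G ε lam tau < G ε lam t := hanti1 ⟨le_rfl, httau.le⟩ ⟨httau.le, le_rfl⟩ httau
      have h2 : G ε lam t2 ≤ G ε lam tau := by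
        rcases eq_or_lt_of_le ht2tau with h | h
        · rw [h]
        · exact (hanti2 ⟨le_rfl, ht2tau⟩ ⟨ht2tau, le_rfl⟩ h).le
      linarith
include hε0 htau hq1 hq2 hlam in
lemma G_ge_min (ht2tau : tau ≤ t2) (ht2 : lam * cp ε t2 = t2) :
    ∀ t, min 0 (G ε lam t2) ≤ G ε lam t := by
  intro t
  rcases lt_trichotomy t 0 with h | h | h
  · rcases eq_or_ne (-t) t2 with he | he
    · have h2 : G ε lam t = G ε lam t2 := by rw [← he, G_even]
      rw [h2]; exact min_le_right _ _
    · have := (G_main hε0 htau hq1 hq2 hlam ht2tau ht2 (-t) (by linarith) he).le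
      rw [G_even] at this; exact this
  · rw [h, G_zero]; exact min_le_left _ _
  · rcases eq_or_ne t t2 with he | he
    · rw [he]; exact min_le_right _ _
    · exact (G_main hε0 htau hq1 hq2 hlam ht2tau ht2 t h he).le

include hε0 htau hq1 hq2 hlam in
lemma argmin_eq_of_neg (ht2tau : tau ≤ t2) (ht2 : lam * cp ε t2 = t2)
    (hneg : G ε lam t2 < 0) :
    {t : ℝ | ∀ s, G ε lam t ≤ G ε lam s} = {t2, -t2} := by
  have hmin : min 0 (G ε lam t2) = G ε lam t2 := min_eq_right hneg.le
  have hge := G_ge_min hε0 htau hq1 hq2 hlam ht2tau ht2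
  ext t
  simp only [mem_setOf_eq, mem_insert_iff, mem_singleton_iff]
  constructor
  · intro h
    have hle : G ε lam t ≤ G ε lam t2 := h t2
    rcases lt_trichotomy t 0 with h0 | h0 | h0
    · right
      by_contra hne
      have hne2 : -t ≠ t2 := fun hx => hne (by linarith [hx])
      have := G_main hε0 htau hq1 hq2 hlam ht2tau ht2 (-t) (by linarith) hne2
      rw [hmin, G_even] at this
      linarith
    · exfalso
      rw [h0] at hle
      rw [G_zero] at hle
      linarith
    · left
      by_contra hne
      have := G_main hε0 htau hq1 hq2 hlam ht2tau ht2 t h0 hne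
      rw [hmin] at this
      linarith
  · intro h s
    rcases h with h | h
    · rw [h, ← hmin]; exact hge s
    · rw [h, G_even, ← hmin]; exact hge s

include hε0 htau hq1 hq2 hlam in
lemma argmin_eq_of_zero (ht2tau : tau ≤ t2) (ht2 : lam * cp ε t2 = t2)
    (hzero : G ε lam t2 = 0) :
    {t : ℝ | ∀ s, G ε lam t ≤ G ε lam s} = {0, t2, -t2} := by
  have hmin : min 0 (G ε lam t2) = G ε lam t2 := by rw [hzero]; simp
  have hge := G_ge_min hε0 htau hq1 hq2 hlam ht2tau ht2
  ext t
  simp only [mem_setOf_eq, mem_insert_iff, mem_singleton_iff]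
  constructor
  · intro h
    have hle : G ε lam t ≤ 0 := by
      have := h 0
      rw [G_zero] at this; exact this
    rcases lt_trichotomy t 0 with h0 | h0 | h0
    · right; right
      by_contra hne
      have hne2 : -t ≠ t2 := fun hx => hne (by linarith [hx])
      have := G_main hε0 htau hq1 hq2 hlam ht2tau ht2 (-t) (by linarith) hne2
      rw [hmin, hzero, G_even] at this
      linarith
    · left; exact h0
    · right; left
      by_contra hne
      have := G_main hε0 htau hq1 hq2 hlam ht2tau ht2 t h0 hne
      rw [hmin, hzero] at this
      linarith
  · intro h s
    have := hge s
    rw [hmin, hzero] at this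
    rcases h with h | h | h
    · rw [h, G_zero]; exact this
    · rw [h, hzero]; exact this
    · rw [h, G_even, hzero]; exact this

include hε0 htau hq1 hq2 hlam in
lemma argmin_eq_of_pos (ht2tau : tau ≤ t2) (ht2 : lam * cp ε t2 = t2)
    (hpos : 0 < G ε lam t2) :
    {t : ℝ | ∀ s, G ε lam t ≤ G ε lam s} = {0} := by
  have hmin : min 0 (G ε lam t2) = 0 := min_eq_left hpos.le
  have hge := G_ge_min hε0 htau hq1 hq2 hlam ht2tau ht2
  ext t
  simp only [mem_setOf_eq, mem_singleton_iff]
  constructor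
  · intro h
    have hle : G ε lam t ≤ 0 := by
      have := h 0
      rw [G_zero] at this; exact this
    rcases lt_trichotomy t 0 with h0 | h0 | h0
    · exfalso
      rcases eq_or_ne (-t) t2 with he | he
      · have : G ε lam t = G ε lam t2 := by rw [← G_even, he]
        linarith
      · have := G_main hε0 htau hq1 hq2 hlam ht2tau ht2 (-t) (by linarith) he
        rw [hmin, G_even] at this
        linarith
    · exact h0
    · exfalso
      rcases eq_or_ne t t2 with he | he
      · rw [he] at hle; linarith
      · have := G_main hε0 htau hq1 hq2 hlam ht2tau ht2 t h0 he
        rw [hmin] at this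
        linarith
  · intro h s
    rw [h, G_zero, ← hmin]
    exact hge s

include hε0 htau hq1 hq2 hlam in
lemma argmin_eq_small (hsmall : lam * cp ε tau < tau) :
    {t : ℝ | ∀ s, G ε lam t ≤ G ε lam s} = {0} := by
  have hrtau : rho ε tau < 1/lam := by
    rw [rho, div_lt_div_iff₀ htau hlam]; linarith
  have hmono : StrictMonoOn (G ε lam) (Ici 0) := by
    apply G_strictMonoOn hε0 (convex_Ici 0) _ hlam
    intro s hs
    rw [interior_Ici] at hs
    apply rho_lt_inv_imp hlam hs
    calc rho ε s ≤ rho ε tau := rho_le_rho_tau hε0 htau hq1 hq2 hs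
      _ < 1/lam := hrtau
  have hpos : ∀ t : ℝ, t ≠ 0 → 0 < G ε lam t := by
    intro t ht
    rcases lt_or_gt_of_ne ht with h | h
    · rw [← G_even]
      have := hmono (self_mem_Ici) (mem_Ici.2 (by linarith : (0:ℝ) ≤ -t)) (by linarith)
      rw [G_zero] at this; exact this
    · have := hmono (self_mem_Ici) (mem_Ici.2 h.le) h
      rw [G_zero] at this; exact this
  ext t
  simp only [mem_setOf_eq, mem_singleton_iff]
  constructor
  · intro h
    by_contra hne
    have h1 := hpos t hne
    have h2 := h 0
    rw [G_zero] at h2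
    linarith
  · intro h s
    rw [h, G_zero]
    rcases eq_or_ne s 0 with hs | hs
    · rw [hs, G_zero]
    · exact (hpos s hs).le

include hε0 htau hq1 hq2 hlam in
lemma exists_t2 (hbig : tau ≤ lam * cp ε tau) :
    ∃ t2, tau ≤ t2 ∧ lam * cp ε t2 = t2 := by
  set B : ℝ := max tau lam + 1 with hB
  have hBtau : tau < B := by
    have := le_max_left tau lam; rw [hB]; linarith
  have hBlam : lam < B := by
    have := le_max_right tau lam; rw [hB]; linarith
  have hBpos : 0 < B := lt_trans htau hBtau
  have hrhoB : rho ε B < 1/lam := by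
    calc rho ε B < 1/B := rho_lt_inv hε0 hBpos
      _ < 1/lam := by
          rw [div_lt_div_iff₀ hBpos hlam]; linarith
  have hrhotau : 1/lam ≤ rho ε tau := by
    rw [rho, div_le_div_iff₀ hlam htau]; linarith
  have hmem : 1/lam ∈ Icc (rho ε B) (rho ε tau) := ⟨hrhoB.le, hrhotau⟩
  obtain ⟨t2, ht2mem, ht2⟩ := intermediate_value_Icc' hBtau.le
    (continuousOn_rho hε0 (fun t ht => ne_of_gt (lt_of_lt_of_le htau ht.1))) hmem
  refine ⟨t2, ht2mem.1, ?_⟩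
  have ht20 : 0 < t2 := lt_of_lt_of_le htau ht2mem.1
  rw [rho, div_eq_div_iff (ne_of_gt ht20) (ne_of_gt hlam)] at ht2
  linarith

end main

section reduction

variable {β : ℝ}

lemma eps_pos : 0 < Real.exp (-β) := Real.exp_pos _

lemma eps_lt (hβ4 : Real.log 4 < β) : Real.exp (-β) < 1/4 := by
  have h1 : Real.exp (-β) < Real.exp (-Real.log 4) := Real.exp_lt_exp.2 (by linarith)
  have h2 : Real.exp (-Real.log 4) = 1/4 := by
    rw [Real.exp_neg, Real.exp_log (by norm_num : (0:ℝ) < 4)]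
    norm_num
  linarith

lemma beta_pos (hβ4 : Real.log 4 < β) : 0 < β :=
  lt_trans (Real.log_pos (by norm_num)) hβ4

lemma cBeta_eq (t : ℝ) : cBeta β t = c (Real.exp (-β)) t := by
  have h1 : (1 + Real.exp (-β) * (Real.exp t + Real.exp (-t))) ≠ 0 :=
    ne_of_gt (A_pos (ε := Real.exp (-β)) eps_pos t)
  have h2 : (1 + 2 * Real.exp (-β)) ≠ 0 := ne_of_gt (one_add_two_eps_pos eps_pos)
  unfold cBeta c A u
  rw [Real.log_div h1 h2]

lemma linear_bound {z : ℝ} (hz : z ∈ Icc (-1:ℝ) 1) (t : ℝ) :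
    t * z - cBeta β t ≤ β + Real.log (1 + 2*Real.exp (-β)) := by
  rw [cBeta_eq]
  have h1 := c_lower eps_pos (ε := Real.exp (-β)) t
  rw [Real.log_exp] at h1
  have h2 : t * z ≤ |t| := by
    calc t * z ≤ |t * z| := le_abs_self _
      _ = |t| * |z| := abs_mul t z
      _ ≤ |t| * 1 := by
          apply mul_le_mul_of_nonneg_left _ (abs_nonneg t)
          rw [abs_le]; exact ⟨hz.1, hz.2⟩
      _ = |t| := mul_one _
  linarith

lemma bddAbove_range {z : ℝ} (hz : z ∈ Icc (-1:ℝ) 1) :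
    BddAbove (Set.range fun t => t * z - cBeta β t) := by
  refine ⟨β + Real.log (1 + 2*Real.exp (-β)), ?_⟩
  rintro _ ⟨t, rfl⟩
  exact linear_bound hz t

lemma Jbeta_ge {z : ℝ} (hz : z ∈ Icc (-1:ℝ) 1) (t : ℝ) :
    t * z - cBeta β t ≤ Jbeta β z :=
  le_ciSup (bddAbove_range hz) t

lemma Jbeta_cp (t : ℝ) :
    Jbeta β (cp (Real.exp (-β)) t) = t * cp (Real.exp (-β)) t - c (Real.exp (-β)) t := by
  set ε := Real.exp (-β) with hε
  have hε0 : 0 < ε := eps_pos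
  apply le_antisymm
  · apply ciSup_le
    intro s
    rw [cBeta_eq]
    have := c_tangent hε0 t s
    nlinarith
  · have := Jbeta_ge (cp_mem_Icc hε0 t) (β := β) t
    rw [cBeta_eq] at this
    exact this

lemma tildeE_eq (hβ4 : Real.log 4 < β) {K : ℝ} (hK : 0 < K) :
    tildeE β K = (fun t => t / (2*β*K)) ''
      {t : ℝ | ∀ s, G (Real.exp (-β)) (2*β*K) t ≤ G (Real.exp (-β)) (2*β*K) s} := by
  set ε := Real.exp (-β) with hε
  have hε0 : 0 < ε := eps_pos
  set lam : ℝ := 2*β*K with hlamdef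
  have hβ0 : 0 < β := beta_pos hβ4
  have hlam : 0 < lam := by positivity
  have hβK : β * K = lam / 2 := by rw [hlamdef]; ring
  -- F y ≥ G lam (lam y)
  have hFy : ∀ y ∈ Icc (-1:ℝ) 1, G ε lam (lam * y) ≤ Jbeta β y - β * K * y^2 := by
    intro y hy
    have h1 := Jbeta_ge hy (β := β) (lam * y)
    rw [cBeta_eq] at h1
    have h2 : G ε lam (lam * y) = lam/2 * y^2 - c ε (lam * y) := by
      unfold G
      field_simp
    rw [h2, hβK]
    nlinarith
  -- F (cp s) ≤ G lam s
  have hFcp : ∀ s : ℝ, Jbeta β (cp ε s) - β * K * (cp ε s)^2 ≤ G ε lam s := by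
    intro s
    rw [Jbeta_cp, hβK]
    unfold G
    have h : s^2/(2*lam) - c ε s - (s * cp ε s - c ε s - lam/2 * (cp ε s)^2)
        = (s - lam * cp ε s)^2 / (2*lam) := by
      field_simp
      ring
    nlinarith [div_nonneg (sq_nonneg (s - lam * cp ε s)) (by linarith : (0:ℝ) ≤ 2*lam), h]
  ext z
  constructor
  · rintro ⟨hzIcc, hmin⟩
    refine ⟨lam * z, ?_, by field_simp⟩
    intro s
    have h1 : G ε lam (lam * z) ≤ Jbeta β z - β * K * z^2 := hFy z hzIcc
    have h2 : Jbeta β z - β * K * z^2 ≤ Jbeta β (cp ε s) - β * K * (cp ε s)^2 :=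
      hmin (cp ε s) (cp_mem_Icc hε0 s)
    exact le_trans h1 (le_trans h2 (hFcp s))
  · rintro ⟨t, ht, rfl⟩
    have hstat : lam * cp ε t = t := argmin_stationary hε0 hlam ht
    have hzt : t / lam = cp ε t := by
      rw [eq_comm, eq_div_iff hlam.ne']
      linarith
    show t / lam ∈ tildeE β K
    rw [hzt]
    refine ⟨cp_mem_Icc hε0 t, ?_⟩
    intro y hy
    have h1 : Jbeta β (cp ε t) - β * K * (cp ε t)^2 = G ε lam t := by
      rw [Jbeta_cp, hβK]
      unfold G
      have ht2 : t^2 = lam * cp ε t * t := by rw [hstat]; ring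
      rw [ht2]
      field_simp
      nlinarith [hstat]
    rw [h1]
    exact le_trans (ht (lam * y)) (hFy y hy)

end reduction

section more

variable (hlam : 0 < lam)

include hlam in
lemma G_eq_r {t2 : ℝ} (ht2 : lam * cp ε t2 = t2) : G ε lam t2 = r ε t2 := by
  have h : t2^2 = lam * cp ε t2 * t2 := by rw [ht2]; ring
  have h2 : lam * cp ε t2 * t2 / (2*lam) = cp ε t2 * t2 / 2 := by
    field_simp
  unfold G r
  rw [h, h2]
  ring_nf

include hε0 in
lemma cp_eq_ratio (t : ℝ) :
    cp ε t = (ε - ε * (Real.exp (-t) * Real.exp (-t))) /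
      (Real.exp (-t) + ε + ε * (Real.exp (-t) * Real.exp (-t))) := by
  have hXY : Real.exp t * Real.exp (-t) = 1 := by
    rw [← Real.exp_add]; simp
  have hden : 0 < Real.exp (-t) + ε + ε * (Real.exp (-t) * Real.exp (-t)) := by positivity
  unfold cp v A u
  rw [div_eq_div_iff (show (1 + ε * (Real.exp t + Real.exp (-t))) ≠ 0 from
    ne_of_gt (A_pos hε0 t)) (ne_of_gt hden)]
  linear_combination (ε + 2*ε^2 * Real.exp (-t)) * hXY

include hε0 in
lemma cp_tendsto : Filter.Tendsto (cp ε) Filter.atTop (nhds 1) := by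
  have h1 : Filter.Tendsto (fun t : ℝ => Real.exp (-t)) Filter.atTop (nhds 0) :=
    Real.tendsto_exp_neg_atTop_nhds_zero
  have h2 : Filter.Tendsto (fun t : ℝ => ε - ε * (Real.exp (-t) * Real.exp (-t)))
      Filter.atTop (nhds ε) := by
    have := ((h1.mul h1).const_mul ε).const_sub ε
    simpa using this
  have h3 : Filter.Tendsto (fun t : ℝ => Real.exp (-t) + ε + ε * (Real.exp (-t) * Real.exp (-t)))
      Filter.atTop (nhds ε) := by
    have := (h1.add_const ε).add ((h1.mul h1).const_mul ε)
    simpa using this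
  have h4 := h2.div h3 hε0.ne'
  rw [div_self hε0.ne'] at h4
  exact Filter.Tendsto.congr (fun t => (cp_eq_ratio hε0 t).symm) h4

include hε0 in
lemma exists_cp_gt {w : ℝ} (hw : w < 1) : ∃ B, w < cp ε B := by
  have := (cp_tendsto hε0).eventually (eventually_gt_nhds hw)
  exact this.exists

end more

end CWaux

open CWaux

/-- Fix `β > log 4`.  There is a critical value `K_c^{(1)}(β) > 0`
such that: (a) for `0 < K < K_c^{(1)}(β)`, `Ẽ_{β,K} = {0}`; (b) for `K = K_c^{(1)}(β)`,
`Ẽ_{β,K} = {0, z̃(β,K), −z̃(β,K)}` with `z̃(β,K) > 0`; (c) for `K > K_c^{(1)}(β)`,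
`Ẽ_{β,K} = {z̃(β,K), −z̃(β,K)}` with `z̃(β,K) > 0`; (d) `K ↦ z̃(β,K)` is strictly
increasing and continuous on `[K_c^{(1)}(β), ∞)`, and `z̃(β, K_c^{(1)}(β)) > 0`. -/
theorem tildeE_structure_first_order (β : ℝ) (hβ : Real.log 4 < β) :
    ∃ Kc1 : ℝ, 0 < Kc1 ∧
      ∃ ztilde : ℝ → ℝ,
        (∀ K : ℝ, 0 < K → K < Kc1 → tildeE β K = {0}) ∧
        (0 < ztilde Kc1 ∧ tildeE β Kc1 = {0, ztilde Kc1, -ztilde Kc1}) ∧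
        (∀ K : ℝ, Kc1 < K → 0 < ztilde K ∧ tildeE β K = {ztilde K, -ztilde K}) ∧
        StrictMonoOn ztilde (Set.Ici Kc1) ∧
        ContinuousOn ztilde (Set.Ici Kc1) := by
  classical
  have hε0 : 0 < Real.exp (-β) := Real.exp_pos _
  set ε := Real.exp (-β) with hεdef
  have hεlt : ε < 1/4 := eps_lt hβ
  have hβ0 : 0 < β := beta_pos hβ
  obtain ⟨T0, hT0, hT0u⟩ := exists_T0 hε0 hεlt
  obtain ⟨tau, htauT0, _hqtau0, hq1, hq2⟩ := exists_tau hε0 hT0 hT0u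
  have htau : 0 < tau := hT0.trans htauT0
  obtain ⟨sc, hsctau, hrsc, hrpos, hrneg⟩ := exists_sc hε0 htau hq1 hq2
  have hsc0 : 0 < sc := htau.trans hsctau
  have hcpsc : 0 < cp ε sc := cp_pos hε0 hsc0
  have hrhoanti := rho_strictAntiOn hε0 htau hq2
  set Kc1 : ℝ := sc / (2*β*cp ε sc) with hKc1def
  have hKc1 : 0 < Kc1 := by positivity
  have hlamK : ∀ K : ℝ, 0 < K → 0 < 2*β*K := fun K hK => by positivity
  have hlamc : 0 < 2*β*Kc1 := hlamK Kc1 hKc1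
  have hlamc_eq : (2*β*Kc1) * cp ε sc = sc := by
    rw [hKc1def]; field_simp
  have hrhosc : rho ε sc = 1/(2*β*Kc1) := rho_t2_eq hlamc hsc0 hlamc_eq
  -- chooser for t2
  have hex : ∀ K : ℝ, ∃ s : ℝ, Kc1 ≤ K → (tau ≤ s ∧ (2*β*K) * cp ε s = s) := by
    intro K
    by_cases hKK : Kc1 ≤ K
    · have hK0 : 0 < K := lt_of_lt_of_le hKc1 hKK
      have hlam := hlamK K hK0
      have hrr : rho ε sc < rho ε tau :=
        hrhoanti self_mem_Ici (mem_Ici.2 hsctau.le) hsctau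
      have hle : 1/(2*β*K) ≤ 1/(2*β*Kc1) := by
        apply one_div_le_one_div_of_le hlamc
        nlinarith
      have hlt : 1/(2*β*K) < rho ε tau := by
        rw [← hrhosc] at hle
        linarith
      have hbig : tau ≤ (2*β*K) * cp ε tau := (inv_lt_rho_imp hlam htau hlt).le
      obtain ⟨t2, h1, h2⟩ := exists_t2 hε0 htau hq1 hq2 hlam hbig
      exact ⟨t2, fun _ => ⟨h1, h2⟩⟩
    · exact ⟨0, fun h => absurd h hKK⟩
  choose t2f ht2f using hex
  -- basic facts about t2f
  have ht2tau : ∀ K, Kc1 ≤ K → tau ≤ t2f K := fun K hKK => (ht2f K hKK).1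
  have ht2eq : ∀ K, Kc1 ≤ K → (2*β*K) * cp ε (t2f K) = t2f K := fun K hKK => (ht2f K hKK).2
  have ht20 : ∀ K, Kc1 ≤ K → 0 < t2f K := fun K hKK => htau.trans_le (ht2tau K hKK)
  have hrhot2 : ∀ K, Kc1 ≤ K → rho ε (t2f K) = 1/(2*β*K) := fun K hKK =>
    rho_t2_eq (hlamK K (lt_of_lt_of_le hKc1 hKK)) (ht20 K hKK) (ht2eq K hKK)
  have huniq : ∀ K s, Kc1 ≤ K → tau ≤ s → (2*β*K) * cp ε s = s → s = t2f K := by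
    intro K s hKK hs hseq
    have hs0 : 0 < s := htau.trans_le hs
    have h1 := rho_t2_eq (hlamK K (lt_of_lt_of_le hKc1 hKK)) hs0 hseq
    have h2 := hrhot2 K hKK
    exact hrhoanti.injOn (mem_Ici.2 hs) (mem_Ici.2 (ht2tau K hKK)) (h1.trans h2.symm)
  have ht2fKc1 : t2f Kc1 = sc := (huniq Kc1 sc le_rfl hsctau.le hlamc_eq).symm
  -- comparisons of t2f with sc
  have ht2_gt_sc : ∀ K, Kc1 < K → sc < t2f K := by
    intro K hKK
    have hrlt : rho ε (t2f K) < rho ε sc := by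
      rw [hrhot2 K hKK.le, hrhosc]
      apply one_div_lt_one_div_of_lt hlamc
      nlinarith
    by_contra hcon
    push_neg at hcon
    rcases eq_or_lt_of_le hcon with h | h
    · rw [h] at hrlt; linarith
    · have := hrhoanti (mem_Ici.2 (ht2tau K hKK.le)) (mem_Ici.2 hsctau.le) h
      linarith
  -- strict monotonicity of t2f
  have ht2mono : ∀ K1 K2, Kc1 ≤ K1 → K1 < K2 → t2f K1 < t2f K2 := by
    intro K1 K2 h1 h12
    have h2 : Kc1 ≤ K2 := h1.trans h12.le
    have hrlt : rho ε (t2f K2) < rho ε (t2f K1) := by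
      rw [hrhot2 K1 h1, hrhot2 K2 h2]
      apply one_div_lt_one_div_of_lt (hlamK K1 (lt_of_lt_of_le hKc1 h1))
      nlinarith [lt_of_lt_of_le hKc1 h1]
    by_contra hcon
    push_neg at hcon
    rcases eq_or_lt_of_le hcon with h | h
    · rw [h] at hrlt; linarith
    · have := hrhoanti (mem_Ici.2 (ht2tau K2 h2)) (mem_Ici.2 (ht2tau K1 h1)) h
      linarith
  have hmonoZ : StrictMonoOn (fun K => cp ε (t2f K)) (Ici Kc1) := by
    intro K1 h1 K2 _h2 h12
    exact cp_strictMono hε0 (ht2mono K1 K2 h1 h12)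
  -- surjectivity
  have hsurj : ∀ w, cp ε sc ≤ w → w < 1 → ∃ K, Kc1 ≤ K ∧ cp ε (t2f K) = w := by
    intro w hw1 hw2
    obtain ⟨B0, hB0⟩ := exists_cp_gt hε0 hw2
    set B := max B0 sc with hBdef
    have hcpB : w < cp ε B := by
      rcases eq_or_lt_of_le (le_max_left B0 sc) with h | h
      · rw [hBdef, ← h]; exact hB0
      · exact lt_trans hB0 (cp_strictMono hε0 h)
    obtain ⟨s, hsmem, hcps⟩ := intermediate_value_Icc (le_max_right B0 sc)
      ((continuous_cp hε0).continuousOn) ⟨hw1, hcpB.le⟩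
    have hs0 : 0 < s := lt_of_lt_of_le hsc0 hsmem.1
    have hstau : tau ≤ s := le_trans hsctau.le hsmem.1
    have hcpspos : 0 < cp ε s := cp_pos hε0 hs0
    set K := s/(2*β*cp ε s) with hKdef
    have hK0 : 0 < K := by positivity
    have hKeq : (2*β*K)*cp ε s = s := by
      rw [hKdef]; field_simp
    have hKc1K : Kc1 ≤ K := by
      rw [hKc1def, hKdef, div_le_div_iff₀ (by positivity) (by positivity)]
      -- sc * (2β cp s) ≤ s * (2β cp sc)  ⟸  sc * cp s ≤ s * cp sc
      have hcross : cp ε s * sc ≤ cp ε sc * s := by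
        have hrs : rho ε s ≤ rho ε sc := by
          rcases eq_or_lt_of_le hsmem.1 with h | h
          · rw [← h]
          · exact (hrhoanti (mem_Ici.2 hsctau.le) (mem_Ici.2 hstau) h).le
        rw [rho, rho, div_le_div_iff₀ hs0 hsc0] at hrs
        exact hrs
      nlinarith
    refine ⟨K, hKc1K, ?_⟩
    rw [← huniq K s hKc1K hstau hKeq, hcps]
  -- value at Kc1
  have hzKc1 : cp ε (t2f Kc1) = cp ε sc := by rw [ht2fKc1]
  refine ⟨Kc1, hKc1, fun K => cp ε (t2f K), ?_, ⟨?_, ?_⟩, ?_, ?_, ?_⟩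
  · -- (a) subcritical
    intro K hK hKlt
    have hlam := hlamK K hK
    rw [tildeE_eq hβ hK, ← hεdef]
    rcases lt_or_ge ((2*β*K) * cp ε tau) tau with hsmall | hbig
    · rw [argmin_eq_small hε0 htau hq1 hq2 hlam hsmall]
      simp
    · obtain ⟨t2, h2tau, h2eq⟩ := exists_t2 hε0 htau hq1 hq2 hlam hbig
      have h20 : 0 < t2 := htau.trans_le h2tau
      have hrt2rho : rho ε t2 = 1/(2*β*K) := rho_t2_eq hlam h20 h2eq
      have hlt : t2 < sc := by
        have hgt : rho ε sc < rho ε t2 := by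
          rw [hrt2rho, hrhosc]
          apply one_div_lt_one_div_of_lt hlam
          nlinarith
        by_contra hcon
        push_neg at hcon
        rcases eq_or_lt_of_le hcon with h | h
        · rw [h] at hgt; linarith
        · have := hrhoanti (mem_Ici.2 hsctau.le) (mem_Ici.2 (hsctau.le.trans h.le)) h
          linarith
      have hGpos : 0 < G ε (2*β*K) t2 := by
        rw [G_eq_r hlam h2eq]
        exact hrpos t2 h2tau hlt
      rw [argmin_eq_of_pos hε0 htau hq1 hq2 hlam h2tau h2eq hGpos]
      simp
  · -- (b) positivity at Kc1
    show 0 < cp ε (t2f Kc1)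
    rw [hzKc1]; exact hcpsc
  · -- (b) structure at Kc1
    show tildeE β Kc1 = {0, cp ε (t2f Kc1), -cp ε (t2f Kc1)}
    rw [tildeE_eq hβ hKc1, ← hεdef]
    have hGzero : G ε (2*β*Kc1) sc = 0 := by
      rw [G_eq_r hlamc hlamc_eq]; exact hrsc
    rw [argmin_eq_of_zero hε0 htau hq1 hq2 hlamc hsctau.le hlamc_eq hGzero]
    have e1 : sc / (2*β*Kc1) = cp ε sc := by
      rw [eq_comm, eq_div_iff hlamc.ne']
      linarith [hlamc_eq]
    rw [Set.image_insert_eq, Set.image_insert_eq, Set.image_singleton]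
    rw [zero_div, e1, neg_div, e1, hzKc1]

  · -- (c) supercritical
    intro K hKK
    have hK0 : 0 < K := lt_trans hKc1 hKK
    have hlam := hlamK K hK0
    have h20 := ht20 K hKK.le
    refine ⟨cp_pos hε0 h20, ?_⟩
    show tildeE β K = {cp ε (t2f K), -cp ε (t2f K)}
    rw [tildeE_eq hβ hK0, ← hεdef]
    have hGneg : G ε (2*β*K) (t2f K) < 0 := by
      rw [G_eq_r hlam (ht2eq K hKK.le)]
      exact hrneg (t2f K) (ht2_gt_sc K hKK)
    rw [argmin_eq_of_neg hε0 htau hq1 hq2 hlam (ht2tau K hKK.le) (ht2eq K hKK.le) hGneg]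
    have e1 : t2f K / (2*β*K) = cp ε (t2f K) := by
      rw [eq_comm, eq_div_iff hlam.ne']
      linarith [ht2eq K hKK.le]
    rw [Set.image_insert_eq, Set.image_singleton, e1, neg_div, e1]
  · -- (d) strict monotonicity
    exact hmonoZ
  · -- (d) continuity
    intro a ha
    have haK : Kc1 ≤ a := ha
    have hza1 : cp ε (t2f a) < 1 := cp_lt_one hε0 _
    have hzaKc1 : cp ε sc ≤ cp ε (t2f a) := by
      rcases eq_or_lt_of_le haK with h | h
      · rw [← h, hzKc1]
      · rw [← hzKc1]
        exact (hmonoZ self_mem_Ici ha h).le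
    have hfs_r : ∀ b, b > cp ε (t2f a) → ∃ c ∈ Ici Kc1,
        (fun K => cp ε (t2f K)) c ∈ Ioc (cp ε (t2f a)) b := by
      intro b hb
      set w := min b ((cp ε (t2f a) + 1)/2) with hwdef
      have hw1 : cp ε (t2f a) < w := lt_min hb (by linarith)
      have hw2 : w < 1 := lt_of_le_of_lt (min_le_right _ _) (by linarith)
      obtain ⟨K, hK1, hK2⟩ := hsurj w (le_trans hzaKc1 hw1.le) hw2
      refine ⟨K, hK1, ?_⟩
      show cp ε (t2f K) ∈ Ioc (cp ε (t2f a)) b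
      rw [hK2]; exact ⟨hw1, min_le_left _ _⟩
    rcases eq_or_lt_of_le haK with heq | hlt
    · -- a = Kc1 : right continuity suffices
      rw [← heq]
      rw [← heq] at hfs_r
      exact hmonoZ.continuousWithinAt_right_of_exists_between self_mem_nhdsWithin hfs_r
    · apply ContinuousAt.continuousWithinAt
      have hfs_l : ∀ b, b < cp ε (t2f a) → ∃ c ∈ Ici Kc1,
          (fun K => cp ε (t2f K)) c ∈ Ico b (cp ε (t2f a)) := by
        intro b hb
        set w := max b (cp ε sc) with hwdef
        have hKlt : cp ε sc < cp ε (t2f a) := by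
          rw [← hzKc1]
          exact hmonoZ self_mem_Ici ha hlt
        have hwlt : w < cp ε (t2f a) := max_lt hb hKlt
        have hw2 : w < 1 := lt_trans hwlt hza1
        obtain ⟨K, hK1, hK2⟩ := hsurj w (le_max_right _ _) hw2
        refine ⟨K, hK1, ?_⟩
        show cp ε (t2f K) ∈ Ico b (cp ε (t2f a))
        rw [hK2]; exact ⟨le_max_left _ _, hwlt⟩
      exact hmonoZ.continuousAt_of_exists_between (Ici_mem_nhds hlt) hfs_l hfs_r
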